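/- Let A ∈ ℝ^{k×k} and let Q ∈ O(k) be chosen uniformly at random (with respect to Haar measure). Then for every subset J ⊆ [k] with |J| = ℓ, the expectation E_Q[prm_J(Q^T A Q)] equals σ_ℓ(A) / C(k,ℓ), where σ_ℓ(A) is the sum of all ℓ×ℓ principal minors of A. -/

import Mathlib

set_option synthInstance.maxHeartbeats 1000000
set_option maxHeartbeats 2000000

open Finset Matrix MeasureTheory

/-- The principal minor of `A` on the index set `J`. -/
noncomputable def prm {k : ℕ} (A : Matrix (Fin k) (Fin k) ℝ) (J : Finset (Fin k)) : ℝ :=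
  (A.submatrix (fun i : {x // x ∈ J} => (i : Fin k)) (fun i : {x // x ∈ J} => (i : Fin k))).det

instance {k : ℕ} : MeasurableSpace (Matrix (Fin k) (Fin k) ℝ) :=
  inferInstanceAs (MeasurableSpace (Fin k → Fin k → ℝ))

section Aux

open Polynomial

/-- determinant of a family with measurable entries is measurable -/
lemma measurable_det_comp {n : Type*} [Fintype n] [DecidableEq n]
    {α : Type*} [MeasurableSpace α] (M : α → Matrix n n ℝ)
    (h : ∀ i j, Measurable fun a => M a i j) : Measurable fun a => (M a).det := by
  simp_rw [Matrix.det_apply]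
  refine Finset.measurable_sum _ fun σ _ => ?_
  have : Measurable fun a => ∏ i, M a (σ i) i :=
    Finset.measurable_prod _ fun i _ => h _ _
  exact this.const_smul (Equiv.Perm.sign σ)

lemma abs_det_le {n : Type*} [Fintype n] [DecidableEq n]
    (B : Matrix n n ℝ) (c : ℝ) (h : ∀ i j, |B i j| ≤ c) :
    |B.det| ≤ Nat.factorial (Fintype.card n) * c ^ (Fintype.card n) := by
  rw [Matrix.det_apply]
  calc |∑ σ : Equiv.Perm n, Equiv.Perm.sign σ • ∏ i, B (σ i) i|
      ≤ ∑ σ : Equiv.Perm n, |Equiv.Perm.sign σ • ∏ i, B (σ i) i| :=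
        Finset.abs_sum_le_sum_abs _ _
    _ ≤ ∑ _σ : Equiv.Perm n, c ^ (Fintype.card n) := by
        refine Finset.sum_le_sum fun σ _ => ?_
        have h1 : |((Equiv.Perm.sign σ : ℤ) : ℝ)| = 1 := by
          rcases Int.units_eq_one_or (Equiv.Perm.sign σ) with h' | h' <;> simp [h']
        rw [Units.smul_def, zsmul_eq_mul, abs_mul, h1, one_mul]
        calc |∏ i, B (σ i) i| = ∏ i, |B (σ i) i| := by rw [Finset.abs_prod]
          _ ≤ ∏ _i : n, c := Finset.prod_le_prod (fun _ _ => abs_nonneg _)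
              (fun i _ => h _ _)
          _ = c ^ (Fintype.card n) := by simp [Finset.prod_const]
    _ = Nat.factorial (Fintype.card n) * c ^ (Fintype.card n) := by
        simp [Finset.sum_const, Fintype.card_perm, nsmul_eq_mul]

/-- det of the matrix with rows of `M.map C` on `s` and identity rows elsewhere. -/
lemma det_piecewise_eq {k : ℕ} (M : Matrix (Fin k) (Fin k) ℝ) (s : Finset (Fin k)) :
    Matrix.det (s.piecewise (M.map (C : ℝ →+* ℝ[X]))
      ((1 : Matrix (Fin k) (Fin k) ℝ[X]) : (i : Fin k) → Fin k → ℝ[X])) = C (prm M s) := by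
  classical
  set M' : Matrix (Fin k) (Fin k) ℝ[X] := M.map C with hM'
  set e : {x // x ∈ s} ⊕ {x // ¬ x ∈ s} ≃ Fin k := Equiv.sumCompl (fun x => x ∈ s) with he
  set R : Matrix (Fin k) (Fin k) ℝ[X] := s.piecewise M' (1 : Matrix (Fin k) (Fin k) ℝ[X]) with hR
  have hsub : R.submatrix e e =
      Matrix.fromBlocks
        ((M.submatrix (fun i : {x // x ∈ s} => (i : Fin k)) (fun i : {x // x ∈ s} => (i : Fin k))).map C)
        ((M.submatrix (fun i : {x // x ∈ s} => (i : Fin k)) (fun i : {x // ¬ x ∈ s} => (i : Fin k))).map C)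
        0 1 := by
    ext i j : 1
    rcases i with i | i <;> rcases j with j | j
    · rw [Matrix.submatrix_apply]; simp [R, M', he, Finset.piecewise, i.2, j.2, Matrix.one_apply, Subtype.ext_iff]
    · rw [Matrix.submatrix_apply]; simp [R, M', he, Finset.piecewise, i.2, j.2, Matrix.one_apply, Subtype.ext_iff]
    · have hne : (↑i : Fin k) ≠ ↑j := fun h => i.2 (h ▸ j.2)
      rw [Matrix.submatrix_apply]; simp [R, M', he, Finset.piecewise, i.2, j.2, Matrix.one_apply, hne]
    · rw [Matrix.submatrix_apply]; simp [R, M', he, Finset.piecewise, i.2, j.2, Matrix.one_apply, Subtype.ext_iff]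
  have hdet : R.det = (R.submatrix e e).det := (Matrix.det_submatrix_equiv_self e R).symm
  rw [hdet, hsub, Matrix.det_fromBlocks_zero₂₁, Matrix.det_one, mul_one, prm,
    ← RingHom.mapMatrix_apply, ← RingHom.map_det]

lemma det_one_add_X_smul_full {k : ℕ} (M : Matrix (Fin k) (Fin k) ℝ) :
    ((Polynomial.X : ℝ[X]) • M.map C + 1).det
      = ∑ s : Finset (Fin k), (Polynomial.X : ℝ[X]) ^ s.card * C (prm M s) := by
  classical
  set M' : Matrix (Fin k) (Fin k) ℝ[X] := M.map C with hM'
  have h1 : ((Polynomial.X : ℝ[X]) • M' + 1).det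
      = ∑ s : Finset (Fin k),
          Matrix.det (s.piecewise ((Polynomial.X : ℝ[X]) • M' : Matrix (Fin k) (Fin k) ℝ[X])
            ((1 : Matrix (Fin k) (Fin k) ℝ[X]) : (i : Fin k) → Fin k → ℝ[X])) := by
    convert
      (Matrix.detRowAlternating.toMultilinearMap.map_add_univ
        ((Polynomial.X : ℝ[X]) • M' : Matrix (Fin k) (Fin k) ℝ[X])
        ((1 : Matrix (Fin k) (Fin k) ℝ[X]) : (i : Fin k) → Fin k → ℝ[X])) using 3 <;> rfl
  rw [h1]
  refine Finset.sum_congr rfl fun s _ => ?_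
  have h2 : (s.piecewise ((Polynomial.X : ℝ[X]) • M' : Matrix (Fin k) (Fin k) ℝ[X])
        ((1 : Matrix (Fin k) (Fin k) ℝ[X]) : (i : Fin k) → Fin k → ℝ[X]))
      = fun i => (if i ∈ s then (Polynomial.X : ℝ[X]) else 1) •
          (s.piecewise (M' : Matrix (Fin k) (Fin k) ℝ[X])
            ((1 : Matrix (Fin k) (Fin k) ℝ[X]) : (i : Fin k) → Fin k → ℝ[X])) i := by
    funext i
    by_cases h : i ∈ s <;> funext j <;> simp [Finset.piecewise, h]
  have h3 := Matrix.detRowAlternating.toMultilinearMap.map_smul_univ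
      (fun i => if i ∈ s then (Polynomial.X : ℝ[X]) else 1)
      (s.piecewise (M' : Matrix (Fin k) (Fin k) ℝ[X])
        ((1 : Matrix (Fin k) (Fin k) ℝ[X]) : (i : Fin k) → Fin k → ℝ[X]))
  have h4 : Matrix.det (s.piecewise ((Polynomial.X : ℝ[X]) • M' : Matrix (Fin k) (Fin k) ℝ[X])
        ((1 : Matrix (Fin k) (Fin k) ℝ[X]) : (i : Fin k) → Fin k → ℝ[X]))
      = (∏ i : Fin k, if i ∈ s then (Polynomial.X : ℝ[X]) else 1) •
        Matrix.det (s.piecewise (M' : Matrix (Fin k) (Fin k) ℝ[X])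
          ((1 : Matrix (Fin k) (Fin k) ℝ[X]) : (i : Fin k) → Fin k → ℝ[X])) := by
    rw [h2]; exact h3
  rw [h4, det_piecewise_eq M s]
  have h5 : (∏ i : Fin k, if i ∈ s then (Polynomial.X : ℝ[X]) else 1)
      = (Polynomial.X : ℝ[X]) ^ s.card := by
    rw [Finset.prod_ite_mem, Finset.univ_inter, Finset.prod_const]
  rw [h5, smul_eq_mul]

lemma coeff_det_eq_sum_prm {k ℓ : ℕ} (M : Matrix (Fin k) (Fin k) ℝ) :
    (((Polynomial.X : ℝ[X]) • M.map C + 1).det).coeff ℓ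
      = ∑ J ∈ (Finset.univ : Finset (Fin k)).powersetCard ℓ, prm M J := by
  classical
  rw [det_one_add_X_smul_full, Polynomial.finset_sum_coeff]
  have h : ∀ s : Finset (Fin k),
      ((Polynomial.X : ℝ[X]) ^ s.card * C (prm M s)).coeff ℓ
        = if s.card = ℓ then prm M s else 0 := by
    intro s
    rw [mul_comm, Polynomial.coeff_C_mul, Polynomial.coeff_X_pow]
    by_cases h : s.card = ℓ
    · simp [h]
    · simp [h, Ne.symm h]
  simp_rw [h]
  rw [Finset.powersetCard_eq_filter, Finset.powerset_univ, Finset.sum_filter]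

lemma sum_prm_conj {k ℓ : ℕ} (A Q : Matrix (Fin k) (Fin k) ℝ) (hQ : Qᵀ * Q = 1) :
    ∑ J ∈ (Finset.univ : Finset (Fin k)).powersetCard ℓ, prm (Qᵀ * A * Q) J
      = ∑ J ∈ (Finset.univ : Finset (Fin k)).powersetCard ℓ, prm A J := by
  rw [← coeff_det_eq_sum_prm, ← coeff_det_eq_sum_prm]
  congr 1
  have hmap : (Qᵀ * A * Q).map (C : ℝ →+* ℝ[X])
      = (Q.map (C : ℝ →+* ℝ[X]))ᵀ * A.map C * Q.map C := by
    rw [Matrix.map_mul, Matrix.map_mul, Matrix.transpose_map]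
  have hQ' : (Q.map (C : ℝ →+* ℝ[X]))ᵀ * Q.map C = 1 := by
    rw [← Matrix.transpose_map, ← Matrix.map_mul, hQ, Matrix.map_one]
    · exact map_zero C
    · exact map_one C
  set U := Q.map (C : ℝ →+* ℝ[X]) with hU
  have key : (Polynomial.X : ℝ[X]) • (Qᵀ * A * Q).map (C : ℝ →+* ℝ[X]) + 1
      = Uᵀ * ((Polynomial.X : ℝ[X]) • A.map C + 1) * U := by
    rw [hmap, Matrix.mul_add, Matrix.add_mul, Matrix.mul_one, hQ']
    congr 1
    rw [Matrix.mul_smul, Matrix.smul_mul]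
  rw [key, Matrix.det_mul, Matrix.det_mul,
    mul_comm Uᵀ.det ((Polynomial.X : ℝ[X]) • A.map C + 1).det, mul_assoc,
    ← Matrix.det_mul, hQ', Matrix.det_one, mul_one]

noncomputable def permO {k : ℕ} (σ : Equiv.Perm (Fin k)) : Matrix.orthogonalGroup (Fin k) ℝ :=
  ⟨σ.toPEquiv.toMatrix, by
    rw [Matrix.mem_orthogonalGroup_iff, ← PEquiv.toMatrix_symm,
      ← Equiv.toPEquiv_symm, ← PEquiv.toMatrix_trans, ← Equiv.toPEquiv_trans,
      Equiv.self_trans_symm, Equiv.toPEquiv_refl, PEquiv.toMatrix_refl]⟩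

lemma coe_permO {k : ℕ} (σ : Equiv.Perm (Fin k)) :
    ((permO σ : Matrix.orthogonalGroup (Fin k) ℝ) : Matrix (Fin k) (Fin k) ℝ)
      = σ.toPEquiv.toMatrix := rfl

lemma prm_submatrix {k : ℕ} (B : Matrix (Fin k) (Fin k) ℝ) (τ : Equiv.Perm (Fin k))
    (J : Finset (Fin k)) : prm (B.submatrix τ τ) J = prm B (J.image τ) := by
  classical
  let e : {x // x ∈ J} ≃ {x // x ∈ J.image τ} :=
    { toFun := fun i => ⟨τ i, Finset.mem_image_of_mem τ i.2⟩
      invFun := fun i => ⟨τ.symm i, by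
        obtain ⟨a, ha, hab⟩ := Finset.mem_image.mp i.2
        simpa [← hab] using ha⟩
      left_inv := fun i => by simp
      right_inv := fun i => by simp }
  have key : ((B.submatrix τ τ).submatrix
        (fun i : {x // x ∈ J} => (i : Fin k)) (fun i : {x // x ∈ J} => (i : Fin k)))
      = (B.submatrix (fun i : {x // x ∈ J.image τ} => (i : Fin k))
          (fun i : {x // x ∈ J.image τ} => (i : Fin k))).submatrix e e := by
    ext i j; rfl
  rw [prm, key, Matrix.det_submatrix_equiv_self, prm]

lemma exists_perm_image {k : ℕ} (J J' : Finset (Fin k)) (h : J.card = J'.card) :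
    ∃ τ : Equiv.Perm (Fin k), J.image τ = J' := by
  classical
  have h1 : Fintype.card {x // x ∈ J} = Fintype.card {x // x ∈ J'} := by
    simpa [Fintype.card_coe] using h
  have h2 : Fintype.card {x // ¬ x ∈ J} = Fintype.card {x // ¬ x ∈ J'} := by
    rw [Fintype.card_subtype_compl, Fintype.card_subtype_compl]
    simp [Fintype.card_coe, h]
  obtain ⟨e1⟩ := Fintype.card_eq.mp h1
  obtain ⟨e2⟩ := Fintype.card_eq.mp h2
  refine ⟨((Equiv.sumCompl (fun x => x ∈ J)).symm.trans
    ((e1.sumCongr e2).trans (Equiv.sumCompl (fun x => x ∈ J')))), ?_⟩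
  set τ := ((Equiv.sumCompl (fun x => x ∈ J)).symm.trans
    ((e1.sumCongr e2).trans (Equiv.sumCompl (fun x => x ∈ J')))) with hτ
  have hsub : J.image τ ⊆ J' := by
    intro b hb
    obtain ⟨a, ha, rfl⟩ := Finset.mem_image.mp hb
    have : τ a = ((e1 ⟨a, ha⟩ : {x // x ∈ J'}) : Fin k) := by
      simp [hτ, Equiv.sumCompl_symm_apply_of_pos ha]
    rw [this]
    exact (e1 ⟨a, ha⟩).2
  have hcard : (J.image τ).card = J'.card := by
    rw [Finset.card_image_of_injective _ τ.injective, h]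
  exact Finset.eq_of_subset_of_card_le hsub (le_of_eq hcard.symm)

end Aux

section MeasAux

variable {k : ℕ}

local notation "G" => Matrix.orthogonalGroup (Fin k) ℝ

lemma measurable_entry_matrix (i j : Fin k) :
    Measurable fun M : Matrix (Fin k) (Fin k) ℝ => M i j :=
  (measurable_pi_apply j).comp (measurable_pi_apply i)

lemma measurable_coe_entry (i j : Fin k) :
    Measurable fun Q : G => (Q : Matrix (Fin k) (Fin k) ℝ) i j :=
  (measurable_entry_matrix i j).comp measurable_subtype_coe

lemma measurable_mulG : Measurable fun p : G × G => p.1 * p.2 := by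
  apply Measurable.subtype_mk
  apply measurable_pi_lambda
  intro i
  apply measurable_pi_lambda
  intro j
  show Measurable fun p : G × G =>
    ((p.1 : Matrix (Fin k) (Fin k) ℝ) * (p.2 : Matrix (Fin k) (Fin k) ℝ)) i j
  simp_rw [Matrix.mul_apply]
  exact Finset.measurable_sum _ fun a _ =>
    (((measurable_coe_entry i a).comp measurable_fst).mul
      ((measurable_coe_entry a j).comp measurable_snd))

lemma measurable_invG : Measurable fun x : G => x⁻¹ := by
  apply Measurable.subtype_mk
  apply measurable_pi_lambda
  intro i
  apply measurable_pi_lambda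
  intro j
  show Measurable fun x : G => star (x : Matrix (Fin k) (Fin k) ℝ) i j
  have : ∀ x : G, star (x : Matrix (Fin k) (Fin k) ℝ) i j
      = (x : Matrix (Fin k) (Fin k) ℝ) j i := by
    intro x
    simp [Matrix.star_eq_conjTranspose, Matrix.conjTranspose_apply]
  simp_rw [this]
  exact measurable_coe_entry j i

lemma measurable_fJ (A : Matrix (Fin k) (Fin k) ℝ) (J : Finset (Fin k)) :
    Measurable fun Q : G =>
      prm ((Q : Matrix (Fin k) (Fin k) ℝ)ᵀ * A * (Q : Matrix (Fin k) (Fin k) ℝ)) J := by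
  show Measurable fun Q : G =>
    (((Q : Matrix (Fin k) (Fin k) ℝ)ᵀ * A * (Q : Matrix (Fin k) (Fin k) ℝ)).submatrix
      (fun i : {x // x ∈ J} => (i : Fin k)) (fun i : {x // x ∈ J} => (i : Fin k))).det
  apply measurable_det_comp
  intro i j
  show Measurable fun Q : G =>
    ((Q : Matrix (Fin k) (Fin k) ℝ)ᵀ * A * (Q : Matrix (Fin k) (Fin k) ℝ)) (i : Fin k) (j : Fin k)
  simp_rw [Matrix.mul_apply, Matrix.transpose_apply]
  refine Finset.measurable_sum _ fun b _ => Measurable.mul ?_ (measurable_coe_entry _ _)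
  exact Finset.measurable_sum _ fun a _ => (measurable_coe_entry _ _).mul measurable_const

lemma entry_abs_le_one (Q : G) (i j : Fin k) :
    |(Q : Matrix (Fin k) (Fin k) ℝ) i j| ≤ 1 := by
  have h := Q.2.1
  have hdiag : ∑ a, ((Q : Matrix (Fin k) (Fin k) ℝ) a j)
      * ((Q : Matrix (Fin k) (Fin k) ℝ) a j) = 1 := by
    have h2 := congrFun (congrFun h j) j
    simpa [Matrix.mul_apply, Matrix.star_eq_conjTranspose, Matrix.conjTranspose_apply,
      Matrix.one_apply] using h2
  have hle : ((Q : Matrix (Fin k) (Fin k) ℝ) i j) ^ 2 ≤ 1 := by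
    rw [← hdiag]
    have h3 := Finset.single_le_sum
      (f := fun a => ((Q : Matrix (Fin k) (Fin k) ℝ) a j) * ((Q : Matrix (Fin k) (Fin k) ℝ) a j))
      (fun a _ => mul_self_nonneg _) (Finset.mem_univ i)
    simpa [pow_two] using h3
  exact (sq_le_one_iff_abs_le_one _).mp hle

lemma entry_prod_bound (A : Matrix (Fin k) (Fin k) ℝ) (Q : G) (i j : Fin k) :
    |((Q : Matrix (Fin k) (Fin k) ℝ)ᵀ * A * (Q : Matrix (Fin k) (Fin k) ℝ)) i j|
      ≤ ∑ a, ∑ b, |A a b| := by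
  have h1 : ∀ b, |((Q : Matrix (Fin k) (Fin k) ℝ)ᵀ * A) i b| ≤ ∑ a, |A a b| := by
    intro b
    rw [Matrix.mul_apply]
    refine (Finset.abs_sum_le_sum_abs _ _).trans (Finset.sum_le_sum fun a _ => ?_)
    rw [Matrix.transpose_apply, abs_mul]
    calc |(Q : Matrix (Fin k) (Fin k) ℝ) a i| * |A a b|
        ≤ 1 * |A a b| := mul_le_mul_of_nonneg_right (entry_abs_le_one Q a i) (abs_nonneg _)
      _ = |A a b| := one_mul _
  calc |((Q : Matrix (Fin k) (Fin k) ℝ)ᵀ * A * (Q : Matrix (Fin k) (Fin k) ℝ)) i j|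
      = |∑ b, ((Q : Matrix (Fin k) (Fin k) ℝ)ᵀ * A) i b * (Q : Matrix (Fin k) (Fin k) ℝ) b j| := by
        rw [Matrix.mul_apply]
    _ ≤ ∑ b, |((Q : Matrix (Fin k) (Fin k) ℝ)ᵀ * A) i b * (Q : Matrix (Fin k) (Fin k) ℝ) b j| :=
        Finset.abs_sum_le_sum_abs _ _
    _ ≤ ∑ b, ∑ a, |A a b| := by
        refine Finset.sum_le_sum fun b _ => ?_
        rw [abs_mul]
        calc |((Q : Matrix (Fin k) (Fin k) ℝ)ᵀ * A) i b| * |(Q : Matrix (Fin k) (Fin k) ℝ) b j|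
            ≤ (∑ a, |A a b|) * 1 := by
              refine mul_le_mul (h1 b) (entry_abs_le_one Q b j) (abs_nonneg _) ?_
              exact Finset.sum_nonneg fun a _ => abs_nonneg _
          _ = ∑ a, |A a b| := mul_one _
    _ = ∑ a, ∑ b, |A a b| := Finset.sum_comm

lemma fJ_bound (A : Matrix (Fin k) (Fin k) ℝ) (J : Finset (Fin k)) (Q : G) :
    |prm ((Q : Matrix (Fin k) (Fin k) ℝ)ᵀ * A * (Q : Matrix (Fin k) (Fin k) ℝ)) J|
      ≤ Nat.factorial J.card * (∑ a, ∑ b, |A a b|) ^ J.card := by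
  have h := abs_det_le
    (((Q : Matrix (Fin k) (Fin k) ℝ)ᵀ * A * (Q : Matrix (Fin k) (Fin k) ℝ)).submatrix
      (fun i : {x // x ∈ J} => (i : Fin k)) (fun i : {x // x ∈ J} => (i : Fin k)))
    (∑ a, ∑ b, |A a b|) (fun i j => entry_prod_bound A Q _ _)
  simpa [prm, Fintype.card_coe] using h

lemma linv (μ : Measure G) [IsProbabilityMeasure μ]
    (hinv : ∀ Q₀ : G, Measure.map (fun Q => Q₀ * Q) μ = μ) (c : G) (g : G → ℝ)
    (hg : Measurable g) :
    ∫ x, g (c * x) ∂μ = ∫ x, g x ∂μ := by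
  have hφ : Measurable fun Q : G => c * Q :=
    measurable_mulG.comp (measurable_const.prodMk measurable_id)
  have h := integral_map (μ := μ) hφ.aemeasurable hg.aestronglyMeasurable
  rw [hinv c] at h
  exact h.symm

lemma rinv (μ : Measure G) [IsProbabilityMeasure μ]
    (hinv : ∀ Q₀ : G, Measure.map (fun Q => Q₀ * Q) μ = μ) (f : G → ℝ) (hf : Measurable f)
    (C : ℝ) (hb : ∀ x, |f x| ≤ C) (s : G) :
    ∫ x, f (x * s) ∂μ = ∫ x, f x ∂μ := by
  have hms : ∀ s : G, Measurable fun x : G => x * s := fun s =>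
    measurable_mulG.comp (measurable_id.prodMk measurable_const)
  have key : ∀ s : G, ∫ x, f (x * s) ∂μ = ∫ y, f y⁻¹ ∂μ := by
    intro s
    have hmeas : Measurable fun p : G × G => f (p.1⁻¹ * p.2 * s) := by
      apply hf.comp
      exact (hms s).comp
        (measurable_mulG.comp ((measurable_invG.comp measurable_fst).prodMk measurable_snd))
    have hint : Integrable (Function.uncurry fun y x : G => f (y⁻¹ * x * s)) (μ.prod μ) := by
      refine (integrable_const C).mono' hmeas.aestronglyMeasurable (ae_of_all _ fun p => ?_)
      simpa [Real.norm_eq_abs, Function.uncurry] using hb _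
    have step1 : ∀ y : G, ∫ x, f (y⁻¹ * x * s) ∂μ = ∫ x, f (x * s) ∂μ := by
      intro y
      have := linv μ hinv y⁻¹ (fun x => f (x * s)) (hf.comp (hms s))
      simpa [mul_assoc] using this
    have step2 : ∀ x : G, ∫ y, f (y⁻¹ * x * s) ∂μ = ∫ y, f y⁻¹ ∂μ := by
      intro x
      have hmeas2 : Measurable fun y : G => f (y⁻¹ * x * s) :=
        hf.comp ((hms s).comp ((hms x).comp measurable_invG))
      have := linv μ hinv (x * s) (fun y => f (y⁻¹ * x * s)) hmeas2
      have hsimp : ∀ y : G, ((x * s) * y)⁻¹ * x * s = y⁻¹ := fun y => by group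
      simp_rw [hsimp] at this
      exact this.symm
    have e1 : ∫ y, (∫ x, f (y⁻¹ * x * s) ∂μ) ∂μ = ∫ x, f (x * s) ∂μ := by
      simp_rw [step1]; simp
    have e3 : ∫ x, (∫ y, f (y⁻¹ * x * s) ∂μ) ∂μ = ∫ y, f y⁻¹ ∂μ := by
      simp_rw [step2]; simp
    rw [← e1, integral_integral_swap hint, e3]
  rw [key s, ← key 1]
  simp

end MeasAux

/-- Let `μ` be the Haar probability measure on the orthogonal group `O(k)`
(i.e. a left-invariant probability measure).  Then for every `J ⊆ [k]` with `|J| = ℓ`,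
`E_Q[prm_J(Qᵀ A Q)] = σ_ℓ(A) / C(k,ℓ)`, where `σ_ℓ(A)` is the sum of all `ℓ×ℓ`
principal minors of `A`. -/
theorem expectation_principal_minor {k ℓ : ℕ} (A : Matrix (Fin k) (Fin k) ℝ)
    (μ : Measure (Matrix.orthogonalGroup (Fin k) ℝ)) [IsProbabilityMeasure μ]
    (hinv : ∀ Q₀ : Matrix.orthogonalGroup (Fin k) ℝ,
      Measure.map (fun Q => Q₀ * Q) μ = μ)
    (J : Finset (Fin k)) (hJ : J.card = ℓ) :
    ∫ Q : Matrix.orthogonalGroup (Fin k) ℝ,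
        prm ((Q : Matrix (Fin k) (Fin k) ℝ)ᵀ * A * (Q : Matrix (Fin k) (Fin k) ℝ)) J ∂μ
      = (∑ I ∈ (univ : Finset (Fin k)).powersetCard ℓ, prm A I) / (k.choose ℓ) := by
  classical
  set cA : ℝ := ∑ a, ∑ b, |A a b| with hcA
  have hmeasJ : ∀ J' : Finset (Fin k), Measurable fun Q : Matrix.orthogonalGroup (Fin k) ℝ =>
      prm ((Q : Matrix (Fin k) (Fin k) ℝ)ᵀ * A * (Q : Matrix (Fin k) (Fin k) ℝ)) J' :=
    fun J' => measurable_fJ A J'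
  have hintJ : ∀ J' : Finset (Fin k), Integrable (fun Q : Matrix.orthogonalGroup (Fin k) ℝ =>
      prm ((Q : Matrix (Fin k) (Fin k) ℝ)ᵀ * A * (Q : Matrix (Fin k) (Fin k) ℝ)) J') μ := by
    intro J'
    refine (integrable_const ((Nat.factorial J'.card : ℝ) * cA ^ J'.card)).mono'
      (hmeasJ J').aestronglyMeasurable (ae_of_all _ fun Q => ?_)
    simpa [Real.norm_eq_abs] using fJ_bound A J' Q
  have hconst : ∀ J' ∈ (univ : Finset (Fin k)).powersetCard ℓ,
      (∫ Q : Matrix.orthogonalGroup (Fin k) ℝ,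
        prm ((Q : Matrix (Fin k) (Fin k) ℝ)ᵀ * A * (Q : Matrix (Fin k) (Fin k) ℝ)) J' ∂μ)
      = ∫ Q : Matrix.orthogonalGroup (Fin k) ℝ,
          prm ((Q : Matrix (Fin k) (Fin k) ℝ)ᵀ * A * (Q : Matrix (Fin k) (Fin k) ℝ)) J ∂μ := by
    intro J' hJ'
    have hc : J.card = J'.card := by
      rw [hJ, (Finset.mem_powersetCard.mp hJ').2]
    obtain ⟨τ, hτ⟩ := exists_perm_image J J' hc
    have hpt : ∀ Q : Matrix.orthogonalGroup (Fin k) ℝ,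
        prm (((Q * permO τ⁻¹ : Matrix.orthogonalGroup (Fin k) ℝ) : Matrix (Fin k) (Fin k) ℝ)ᵀ
          * A * ((Q * permO τ⁻¹ : Matrix.orthogonalGroup (Fin k) ℝ) : Matrix (Fin k) (Fin k) ℝ)) J
        = prm ((Q : Matrix (Fin k) (Fin k) ℝ)ᵀ * A * (Q : Matrix (Fin k) (Fin k) ℝ)) J' := by
      intro Q
      set P : Matrix (Fin k) (Fin k) ℝ := (τ⁻¹).toPEquiv.toMatrix with hP
      have hcoe : ((Q * permO τ⁻¹ : Matrix.orthogonalGroup (Fin k) ℝ)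
          : Matrix (Fin k) (Fin k) ℝ) = (Q : Matrix (Fin k) (Fin k) ℝ) * P := rfl
      have hPT : Pᵀ = τ.toPEquiv.toMatrix := by
        rw [hP, ← PEquiv.toMatrix_symm, ← Equiv.toPEquiv_symm, Equiv.Perm.inv_def,
          Equiv.symm_symm]
      have hassoc : ((Q : Matrix (Fin k) (Fin k) ℝ) * P)ᵀ * A
            * ((Q : Matrix (Fin k) (Fin k) ℝ) * P)
          = Pᵀ * ((Q : Matrix (Fin k) (Fin k) ℝ)ᵀ * A * (Q : Matrix (Fin k) (Fin k) ℝ)) * P := by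
        rw [Matrix.transpose_mul]
        simp only [Matrix.mul_assoc]
      set B : Matrix (Fin k) (Fin k) ℝ :=
        (Q : Matrix (Fin k) (Fin k) ℝ)ᵀ * A * (Q : Matrix (Fin k) (Fin k) ℝ) with hB
      have hsub : Pᵀ * B * P = B.submatrix τ τ := by
        rw [hPT, hP, PEquiv.toMatrix_toPEquiv_mul, PEquiv.mul_toMatrix_toPEquiv]
        simp [Matrix.submatrix_submatrix, Equiv.Perm.inv_def]
      rw [hcoe, hassoc, hsub, prm_submatrix, hτ]
    calc ∫ Q : Matrix.orthogonalGroup (Fin k) ℝ,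
          prm ((Q : Matrix (Fin k) (Fin k) ℝ)ᵀ * A * (Q : Matrix (Fin k) (Fin k) ℝ)) J' ∂μ
        = ∫ Q : Matrix.orthogonalGroup (Fin k) ℝ,
            prm (((Q * permO τ⁻¹ : Matrix.orthogonalGroup (Fin k) ℝ) : Matrix (Fin k) (Fin k) ℝ)ᵀ
              * A * ((Q * permO τ⁻¹ : Matrix.orthogonalGroup (Fin k) ℝ)
                : Matrix (Fin k) (Fin k) ℝ)) J ∂μ := by
          refine integral_congr_ae (ae_of_all _ fun Q => ?_)
          exact (hpt Q).symm
      _ = ∫ Q : Matrix.orthogonalGroup (Fin k) ℝ,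
            prm ((Q : Matrix (Fin k) (Fin k) ℝ)ᵀ * A * (Q : Matrix (Fin k) (Fin k) ℝ)) J ∂μ :=
          rinv μ hinv _ (hmeasJ J) ((Nat.factorial J.card : ℝ) * cA ^ J.card)
            (fun Q => fJ_bound A J Q) (permO τ⁻¹)
  have horth : ∀ Q : Matrix.orthogonalGroup (Fin k) ℝ,
      (Q : Matrix (Fin k) (Fin k) ℝ)ᵀ * (Q : Matrix (Fin k) (Fin k) ℝ) = 1 := by
    intro Q
    have h := Q.2.1
    rwa [Matrix.star_eq_conjTranspose, Matrix.conjTranspose_eq_transpose_of_trivial] at h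
  have hsum2 : ∑ J' ∈ (univ : Finset (Fin k)).powersetCard ℓ,
      ∫ Q : Matrix.orthogonalGroup (Fin k) ℝ,
        prm ((Q : Matrix (Fin k) (Fin k) ℝ)ᵀ * A * (Q : Matrix (Fin k) (Fin k) ℝ)) J' ∂μ
      = ∑ I ∈ (univ : Finset (Fin k)).powersetCard ℓ, prm A I := by
    rw [← integral_finset_sum _ (fun J' _ => hintJ J')]
    have hpt2 : ∀ Q : Matrix.orthogonalGroup (Fin k) ℝ,
        ∑ J' ∈ (univ : Finset (Fin k)).powersetCard ℓ,
          prm ((Q : Matrix (Fin k) (Fin k) ℝ)ᵀ * A * (Q : Matrix (Fin k) (Fin k) ℝ)) J'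
        = ∑ I ∈ (univ : Finset (Fin k)).powersetCard ℓ, prm A I :=
      fun Q => sum_prm_conj A (Q : Matrix (Fin k) (Fin k) ℝ) (horth Q)
    simp_rw [hpt2]
    simp
  have hsum1 : ∑ J' ∈ (univ : Finset (Fin k)).powersetCard ℓ,
      ∫ Q : Matrix.orthogonalGroup (Fin k) ℝ,
        prm ((Q : Matrix (Fin k) (Fin k) ℝ)ᵀ * A * (Q : Matrix (Fin k) (Fin k) ℝ)) J' ∂μ
      = (k.choose ℓ : ℝ) * ∫ Q : Matrix.orthogonalGroup (Fin k) ℝ,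
          prm ((Q : Matrix (Fin k) (Fin k) ℝ)ᵀ * A * (Q : Matrix (Fin k) (Fin k) ℝ)) J ∂μ := by
    rw [Finset.sum_congr rfl hconst, Finset.sum_const, Finset.card_powersetCard,
      Finset.card_univ, Fintype.card_fin, nsmul_eq_mul]
  have hck : (k.choose ℓ : ℝ) ≠ 0 := by
    have hlk : ℓ ≤ k := by
      rw [← hJ]
      simpa using Finset.card_le_univ J
    exact_mod_cast (Nat.choose_pos hlk).ne'
  rw [eq_div_iff hck, mul_comm, ← hsum1, hsum2]
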